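/- arXiv:1611.09585 — 2 statements merged into one kernel-verified Lean document; each statement's English description precedes it below -/
import Mathlib

section
/- Let G be a finite group acting linearly on a finite-dimensional complex vector space V such that the induced action on Sym^m V is trivial for some m > 0. Then every element of G acts on V by a scalar (homothety). -/
/- STATEMENT 1: Let G be a finite group acting linearly on a finite-dimensional complex
vector space V such that the induced action on Sym^m V is trivial for some m > 0.
Then every element of G acts on V by a scalar (homothety).  Sym^m V is realised as the
quotient of the m-th tensor power by the symmetry relations. -/


open TensorProduct PiTensorProduct

noncomputable def symRel (m : ℕ) (V : Type*) [AddCommGroup V] [Module ℂ V] :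
    Submodule ℂ (⨂[ℂ]^m V) :=
  Submodule.span ℂ {x | ∃ (v : Fin m → V) (σ : Equiv.Perm (Fin m)),
    x = (⨂ₜ[ℂ] i, v i) - ⨂ₜ[ℂ] i, v (σ i)}

noncomputable abbrev SymPow (m : ℕ) (V : Type*) [AddCommGroup V] [Module ℂ V] :=
  (⨂[ℂ]^m V) ⧸ symRel m V

noncomputable def symMap (m : ℕ) {V : Type*} [AddCommGroup V] [Module ℂ V]
    (f : V →ₗ[ℂ] V) : SymPow m V →ₗ[ℂ] SymPow m V :=
  Submodule.mapQ _ _ (PiTensorProduct.map fun _ => f) (by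
    conv_lhs => rw [symRel]
    rw [Submodule.span_le]
    rintro x ⟨v, σ, rfl⟩
    simp only [SetLike.mem_coe, Submodule.mem_comap, map_sub, PiTensorProduct.map_tprod]
    exact Submodule.subset_span ⟨fun i => f (v i), σ, rfl⟩)

lemma keyA {V : Type*} [AddCommGroup V] [Module ℂ V] {m : ℕ} (f : V →ₗ[ℂ] V)
    (htriv : symMap m f = LinearMap.id) (c : V →ₗ[ℂ] ℂ) (v : Fin m → V) :
    ∏ i, c (f (v i)) = ∏ i, c (v i) := by
  set F := (MultilinearMap.mkPiAlgebra ℂ (Fin m) ℂ).compLinearMap (fun _ => c) with hF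
  have hker : symRel m V ≤ LinearMap.ker (PiTensorProduct.lift F) := by
    rw [symRel, Submodule.span_le]
    rintro x ⟨u, σ, rfl⟩
    simp only [SetLike.mem_coe, LinearMap.mem_ker, map_sub, lift.tprod, hF,
      MultilinearMap.compLinearMap_apply, MultilinearMap.mkPiAlgebra_apply, sub_eq_zero]
    exact (Equiv.prod_comp σ fun i => c (u i)).symm
  have h1 : symMap m f (Submodule.Quotient.mk (⨂ₜ[ℂ] i, v i)) =
      Submodule.Quotient.mk (⨂ₜ[ℂ] i, v i) := by rw [htriv]; rfl
  rw [symMap, Submodule.mapQ_apply, PiTensorProduct.map_tprod] at h1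
  have hmem := (Submodule.Quotient.eq _).mp h1
  have h2 := hker hmem
  simpa only [LinearMap.mem_ker, map_sub, lift.tprod, hF,
    MultilinearMap.compLinearMap_apply, MultilinearMap.mkPiAlgebra_apply, sub_eq_zero] using h2

lemma prod_if_eq {k : ℕ} (a b : ℂ) :
    (∏ i : Fin (k + 1), if i = 0 then a else b) = a * b ^ k := by
  rw [← Finset.mul_prod_erase Finset.univ _ (Finset.mem_univ (0 : Fin (k+1))), if_pos rfl]
  congr 1
  rw [Finset.prod_congr rfl (fun i hi => if_neg (Finset.ne_of_mem_erase hi)),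
    Finset.prod_const, Finset.card_erase_of_mem (Finset.mem_univ _), Finset.card_univ,
    Fintype.card_fin, Nat.add_sub_cancel]

lemma eigen_eq {V : Type*} [AddCommGroup V] [Module ℂ V] {k : ℕ} (f : V →ₗ[ℂ] V)
    (htriv : symMap (k+1) f = LinearMap.id) {μ ν : ℂ} {v w : V}
    (hv : v ≠ 0) (hw : w ≠ 0) (hfv : f v = μ • v) (hfw : f w = ν • w) : ν = μ := by
  by_cases hli : LinearIndependent ℂ ![w, v]
  · have h2 := linearIndependent_fin2.mp hli
    simp only [Matrix.cons_val_one, Matrix.head_cons, Matrix.cons_val_zero] at h2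
    have hwv : w ≠ v := fun h => h2.2 1 (by rw [one_smul, h])
    -- build a functional χ with χ v = 1 = χ w
    set s : Set V := Set.range ![w, v] with hs
    have hsub : LinearIndepOn ℂ id s := (linearIndepOn_id_range_iff hli.injective).mpr hli
    set B := Module.Basis.extend hsub with hB
    have hwmem : w ∈ hsub.extend (Set.subset_univ s) :=
      hsub.subset_extend _ ⟨0, rfl⟩
    have hvmem : v ∈ hsub.extend (Set.subset_univ s) :=
      hsub.subset_extend _ ⟨1, rfl⟩
    set χ := B.sumCoords with hχ
    have hχv : χ v = 1 := by
      have := B.sumCoords_self_apply (i := ⟨v, hvmem⟩)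
      rwa [Module.Basis.extend_apply_self] at this
    have hχw : χ w = 1 := by
      have := B.sumCoords_self_apply (i := ⟨w, hwmem⟩)
      rwa [Module.Basis.extend_apply_self] at this
    have e1 : μ ^ (k+1) = 1 := by
      have := keyA f htriv χ (fun _ => v)
      simpa [hfv, hχv] using this
    have e2 : ν * μ ^ k = 1 := by
      have := keyA f htriv χ (fun i => if i = 0 then w else v)
      simp only [apply_ite f, apply_ite χ, hfv, hfw, map_smul, hχv, hχw,
        smul_eq_mul, mul_one] at this
      rw [prod_if_eq, prod_if_eq] at this
      simpa using this
    have hμ0 : μ ^ k ≠ 0 := by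
      intro h
      rw [pow_succ, h, zero_mul] at e1
      exact zero_ne_one e1
    have : ν * μ ^ k = μ * μ ^ k := by
      rw [e2, ← pow_succ']
      exact e1.symm
    exact mul_right_cancel₀ hμ0 this
  · rw [linearIndependent_fin2] at hli
    push_neg at hli
    simp only [Matrix.cons_val_one, Matrix.head_cons, Matrix.cons_val_zero] at hli
    obtain ⟨a, ha⟩ := hli hv
    have ha0 : a ≠ 0 := by rintro rfl; rw [zero_smul] at ha; exact hw ha.symm
    have h1 : (ν * a) • v = (a * μ) • v := by
      rw [← smul_smul, ha, ← hfw, ← ha, map_smul, hfv, smul_smul]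
    have h2 : (ν * a - a * μ) • v = 0 := by rw [sub_smul, h1, sub_self]
    rcases smul_eq_zero.mp h2 with h | h
    · have h3 : ν * a = μ * a := by
        rw [sub_eq_zero] at h; rw [h, mul_comm]
      exact mul_right_cancel₀ ha0 h3
    · exact (hv h).elim

theorem finite_group_trivial_on_sym_pow_acts_by_scalars
    (G : Type*) [Group G] [Finite G]
    (V : Type*) [AddCommGroup V] [Module ℂ V] [FiniteDimensional ℂ V]
    (ρ : Representation ℂ G V)
    (m : ℕ) (hm : 0 < m)
    (htriv : ∀ g : G, symMap m (ρ g) = LinearMap.id) :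
    ∀ g : G, ∃ lam : ℂ, ∀ v : V, ρ g v = lam • v := by
  intro g
  obtain ⟨k, rfl⟩ : ∃ k, m = k + 1 := ⟨m - 1, (Nat.succ_pred_eq_of_pos hm).symm⟩
  set f : Module.End ℂ V := ρ g with hf
  rcases subsingleton_or_nontrivial V with hV | hV
  · exact ⟨0, fun v => Subsingleton.elim _ _⟩
  have hfn : f ^ orderOf g = 1 := by
    rw [hf, ← map_pow, pow_orderOf_eq_one, _root_.map_one]
  have hn0 : ((orderOf g : ℕ) : ℂ) ≠ 0 := Nat.cast_ne_zero.mpr (orderOf_pos g).ne'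
  have hsq : Squarefree ((Polynomial.X : Polynomial ℂ) ^ orderOf g - 1) :=
    (Polynomial.X_pow_sub_one_separable_iff.mpr hn0).squarefree
  have haev : Polynomial.aeval f ((Polynomial.X : Polynomial ℂ) ^ orderOf g - 1) = 0 := by
    simp [hfn]
  have hss := Module.End.isSemisimple_of_squarefree_aeval_eq_zero hsq haev
  have heig : ∀ μ : ℂ, f.maxGenEigenspace μ = f.eigenspace μ :=
    fun μ => hss.isFinitelySemisimple.maxGenEigenspace_eq_eigenspace μ
  obtain ⟨μ, hμ⟩ := Module.End.exists_eigenvalue f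
  obtain ⟨v, hv⟩ := hμ.exists_hasEigenvector
  refine ⟨μ, fun w => ?_⟩
  have hle : ∀ ν : ℂ, f.eigenspace ν ≤ f.eigenspace μ := by
    intro ν w hw
    rcases eq_or_ne w 0 with rfl | hw0
    · exact Submodule.zero_mem _
    · have hνμ : ν = μ := eigen_eq f (htriv g) hv.2 hw0 hv.apply_eq_smul
        (Module.End.mem_eigenspace_iff.mp hw)
      rw [Module.End.mem_eigenspace_iff, ← hνμ]
      exact Module.End.mem_eigenspace_iff.mp hw
  have htop : (⨆ ν : ℂ, f.eigenspace ν) = ⊤ := by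
    have h := Module.End.iSup_maxGenEigenspace_eq_top f
    simp_rw [heig] at h
    exact h
  have hwmem : w ∈ f.eigenspace μ := by
    have h1 : w ∈ ⨆ ν : ℂ, f.eigenspace ν := htop ▸ Submodule.mem_top
    exact (iSup_le hle) h1
  exact Module.End.mem_eigenspace_iff.mp hwmem
end

section
/- Let C be a smooth projective curve of genus g ≥ 1 and L a nontrivial line bundle on C with L⊗L ≅ O_C. Set E = O_C ⊕ L. Then for every m > 0 the symmetric power Sym^m E is not globally generated at any point of C; in particular the stable base locus 𝔹(E) equals C, so E is not strongly semiample. -/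
/- STATEMENT 7: Let C be a smooth projective curve of genus ≥ 1 and L a nontrivial
2-torsion line bundle (L ⊗ L ≅ O_C); set E = O_C ⊕ L.  Then no symmetric power
Sym^m E (m > 0) is globally generated at any point, so 𝔹(E) = C and E is not strongly
semiample.  In the model: 2-torsion is encoded by sec(k+2) = sec k, triviality of L⁰ by
sec 0 = constants, and nontriviality of L (which on a projective curve of genus ≥ 1
forces H⁰(C, L) = 0) by sec 1 = ⊥. -/

open MvPolynomial

/-- The fibre of `Sym^m E` for a rank `r` bundle: homogeneous polynomials of degree `m`
in `r` variables (the `m`-th symmetric power of `ℂ^r`). -/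
noncomputable abbrev Fib (r m : ℕ) : Submodule ℂ (MvPolynomial (Fin r) ℂ) :=
  MvPolynomial.homogeneousSubmodule (Fin r) ℂ m

/-- The constant functions: global sections of the trivial line bundle `O_C` on a
(connected projective) variety `C`. -/
noncomputable def constSec (C : Type*) : Submodule ℂ (C → ℂ) :=
  Submodule.span ℂ {(fun _ => (1 : ℂ))}

/-- A model of a line bundle `L` on a curve `C`, presented in a trivialisation: for each
`k : ℤ`, `sec k` is the space of global sections of `L^{⊗k}` (as scalar functions);
products of sections of `L^{⊗a}` and `L^{⊗b}` are sections of `L^{⊗(a+b)}`. -/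
structure LineBundleModel (C : Type*) where
  sec : ℤ → Submodule ℂ (C → ℂ)
  mul_mem : ∀ {a b : ℤ} {s t : C → ℂ}, s ∈ sec a → t ∈ sec b → (s * t) ∈ sec (a + b)

/-- Global sections of `Sym^m (O_C ⊕ L)` for `E = O_C ⊕ L`: using
`Sym^m (O_C ⊕ L) = ⊕_{i=0}^m L^{⊗i}`, a section is a function into the fibre
(a degree-`m` homogeneous polynomial in two variables `y₀, y₁`) whose coefficient of
`y₀^{m-i} y₁^i` is a global section of `L^{⊗i}`. -/
def secE {C : Type*} (L : LineBundleModel C) (m : ℕ) : Set (C → Fib 2 m) :=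
  {s | ∀ i : ℕ, i ≤ m →
    (fun x => MvPolynomial.coeff
        (Finsupp.single (0 : Fin 2) (m - i) + Finsupp.single (1 : Fin 2) i)
        ((s x : Fib 2 m) : MvPolynomial (Fin 2) ℂ)) ∈ L.sec (i : ℤ)}

/-- `Sym^m E` is generated by global sections at the point `x`. -/
def genAt {C : Type*} (L : LineBundleModel C) (m : ℕ) (x : C) : Prop :=
  Submodule.span ℂ {v : Fib 2 m | ∃ s ∈ secE L m, s x = v} = ⊤

theorem symPow_of_O_plus_torsion_nowhere_generated
    (C : Type*) (L : LineBundleModel C)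
    (htors : ∀ k : ℤ, L.sec (k + 2) = L.sec k)
    (htriv : L.sec 0 = constSec C)
    (hnontriv : L.sec 1 = ⊥) :
    (∀ m : ℕ, 0 < m → ∀ x : C, ¬ genAt L m x) ∧
      (⋂ m ∈ {m : ℕ | 0 < m}, {x : C | ¬ genAt L m x}) = Set.univ := by
  have main : ∀ m : ℕ, 0 < m → ∀ x : C, ¬ genAt L m x := by
    intro m hm x hgen
    set d : Fin 2 →₀ ℕ :=
      Finsupp.single (0 : Fin 2) (m - 1) + Finsupp.single (1 : Fin 2) 1 with hd
    -- the linear functional "coefficient of d"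
    set φ : Fib 2 m →ₗ[ℂ] ℂ :=
      (MvPolynomial.lcoeff ℂ d).comp (Fib 2 m).subtype with hφ
    -- all values of global sections lie in ker φ
    have hker : Submodule.span ℂ {v : Fib 2 m | ∃ s ∈ secE L m, s x = v}
        ≤ LinearMap.ker φ := by
      apply Submodule.span_le.mpr
      rintro v ⟨s, hs, rfl⟩
      have h1 := hs 1 hm
      rw [Nat.cast_one, hnontriv, Submodule.mem_bot] at h1
      have := congrFun h1 x
      simp only [SetLike.mem_coe, LinearMap.mem_ker]
      exact this
    -- the monomial y₀^{m-1} y₁ lies in Fib 2 m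
    have hdsum : ∑ i ∈ d.support, d i = m := by
      have h01 : (0 : Fin 2) ≠ 1 := by decide
      have huniv : ∑ i : Fin 2, d i = ∑ i ∈ d.support, d i :=
        (Finset.sum_subset (Finset.subset_univ d.support)
          (fun i _ hi => Finsupp.notMem_support_iff.mp hi)).symm
      rw [← huniv, Fin.sum_univ_two]
      simp [hd, Finsupp.single_apply, h01]
      omega
    have hvmem : (MvPolynomial.monomial d (1 : ℂ)) ∈ Fib 2 m := by
      rw [MvPolynomial.mem_homogeneousSubmodule]
      exact MvPolynomial.isHomogeneous_monomial _ (by simpa [Finsupp.degree_apply] using hdsum)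
    set v : Fib 2 m := ⟨MvPolynomial.monomial d (1 : ℂ), hvmem⟩ with hv
    have hvtop : v ∈ Submodule.span ℂ {v : Fib 2 m | ∃ s ∈ secE L m, s x = v} := by
      rw [hgen]; trivial
    have := hker hvtop
    rw [LinearMap.mem_ker] at this
    have : (1 : ℂ) = 0 := by
      simpa [φ, v, MvPolynomial.lcoeff, MvPolynomial.coeff_monomial] using this
    exact one_ne_zero this
  refine ⟨main, ?_⟩
  apply Set.eq_univ_iff_forall.mpr
  intro x
  simp only [Set.mem_iInter, Set.mem_setOf_eq]
  intro m hm
  exact main m hm x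
end
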